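/- If G(V,E,C,f) is a (t+1)-color connected colored edge graph with |V| = n, |E| = λ, |C| = m, then the partition (E, {E_c : c ∈ C}) is a (t; n−1)-cover free family: for any t colors c_1,…,c_t ∈ C, |E \ (E_{c_1} ∪ ⋯ ∪ E_{c_t})| ≥ n−1. -/

import Mathlib

/-- A connected graph on a finite vertex type has at least `card V - 1` edges. -/
lemma conn_card_le {V : Type*} [Fintype V] (G : SimpleGraph V) (hc : G.Connected) :
    Fintype.card V - 1 ≤ G.edgeSet.ncard := by
  classical
  obtain ⟨r⟩ := hc.nonempty
  -- for each v ≠ r, find neighbor u with shorter distance to r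
  have key : ∀ v : V, v ≠ r → ∃ u, G.Adj v u ∧ G.dist r u < G.dist r v := by
    intro v hv
    obtain ⟨p, hp⟩ := (hc.preconnected v r).exists_walk_length_eq_dist
    cases p with
    | nil => exact absurd rfl hv
    | cons h q =>
      rename_i u
      refine ⟨u, h, ?_⟩
      have h1 : G.dist r u ≤ q.length := by
        rw [SimpleGraph.dist_comm]; exact SimpleGraph.dist_le q
      have h2 : G.dist r v = q.length + 1 := by
        rw [SimpleGraph.dist_comm, ← hp, SimpleGraph.Walk.length_cons]
      omega
  choose u hadj hdist using key
  -- injective map from {v // v ≠ r} to edges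
  have hfin : G.edgeSet.Finite := Set.toFinite _
  have hinj : Function.Injective
      (fun v : {v : V // v ≠ r} => (⟨s(v.1, u v.1 v.2), hadj v.1 v.2⟩ : G.edgeSet)) := by
    rintro ⟨v, hv⟩ ⟨w, hw⟩ h
    replace h : s(v, u v hv) = s(w, u w hw) := congrArg Subtype.val h
    simp only [Subtype.mk.injEq, Sym2.eq_iff, Sym2.eq, Sym2.rel_iff', Prod.mk.injEq, Prod.swap_prod_mk] at h
    rcases h with ⟨h1, h2⟩ | ⟨h1, h2⟩
    · simp [h1]
    · exfalso
      have := hdist v hv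
      have := hdist w hw
      subst h1
      rw [h2] at this
      omega
  have hcard : Fintype.card {v : V // v ≠ r} ≤ Fintype.card G.edgeSet :=
    Fintype.card_le_of_injective _ hinj
  have : Fintype.card {v : V // v ≠ r} = Fintype.card V - 1 := by
    rw [Fintype.card_subtype_compl]
    simp
  rw [Set.ncard_eq_toFinset_card', Set.toFinset_card]
  rwa [this] at hcard



/-- If `G(V,E,C,f)` is a `(t+1)`-color connected colored edge graph
with `|V| = n`, then the color classes form a `(t; n-1)`-cover free family:
removing the edges of any `t` colors leaves at least `n - 1` edges. -/
theorem stmt_4 {V C : Type*} [Fintype V] [Fintype C]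
    (G : SimpleGraph V) (f : Sym2 V → C) (n lam m t : ℕ)
    (hn : Fintype.card V = n) (hlam : G.edgeSet.ncard = lam)
    (hm : Fintype.card C = m)
    (hsurj : ∀ c : C, ∃ e ∈ G.edgeSet, f e = c)
    (hconn : ∀ Ct : Finset C, Ct.card = t →
        ∀ A B : V, (G.deleteEdges (f ⁻¹' ↑Ct)).Reachable A B) :
    ∀ Ct : Finset C, Ct.card = t →
      (G.edgeSet \ (f ⁻¹' ↑Ct)).ncard ≥ n - 1 := by
  intro Ct hCt
  classical
  cases isEmpty_or_nonempty V with
  | inl h =>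
    have : n = 0 := by rw [← hn]; simp
    simp [this]
  | inr h =>
    have hc : (G.deleteEdges (f ⁻¹' ↑Ct)).Connected :=
      SimpleGraph.Connected.mk (hconn Ct hCt)
    have := conn_card_le _ hc
    rwa [SimpleGraph.edgeSet_deleteEdges, hn] at this
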